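/- For every natural number n ≥ 1, the n-th moment satisfies μ_n = c · ∑_{k=0}^{n−1} binom(n+k−1, 2k) · c^{n−1−k} · b^k · C_k, and μ_0 = 1. -/
import Mathlib

open Polynomial Finset


noncomputable def aaF : ℕ → ℕ → ℝ
  | _, 0 => 1
  | n, (k+1) => ((n + 2*k + 2).choose (k+1) : ℝ) - ((n + 2*k + 2).choose k : ℝ)

lemma pasc (m j : ℕ) : ((m+1).choose (j+1) : ℝ) = m.choose j + m.choose (j+1) := by
  exact_mod_cast Nat.choose_succ_succ m j

lemma aa_zero (n : ℕ) : aaF n 0 = 1 := rfl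

lemma aa_rec (n k : ℕ) : aaF (n+2) k = aaF (n+1) (k+1) - aaF n (k+1) := by
  cases k with
  | zero => simp [aaF, Nat.choose_one_right]
  | succ k =>
    simp only [aaF]
    rw [show n+2+2*k+2 = (n+2*k+2)+2 by ring,
        show n+1+2*(k+1)+2 = ((n+2*k+2)+2)+1 by ring,
        show n+2*(k+1)+2 = (n+2*k+2)+2 by ring,
        show k+1+1 = (k+1)+1 from rfl]
    rw [pasc ((n+2*k+2)+1+1) (k+1), pasc ((n+2*k+2)+1+1) k]
    ring

lemma aa_shift (k : ℕ) : aaF 1 k = aaF 0 (k+1) := by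
  cases k with
  | zero => norm_num [aaF]
  | succ j =>
    simp only [aaF]
    rw [show 1+2*j+2 = (2*j+2)+1 by ring,
        show 0+2*(j+1)+2 = ((2*j+2)+1)+1 by ring]
    rw [pasc ((2*j+2)+1) (j+1), pasc ((2*j+2)+1) j]
    have hsym : ((2*j+2)+1).choose (j+2) = ((2*j+2)+1).choose (j+1) := by
      rw [show j+2 = (2*j+2)+1 - (j+1) by omega]
      exact Nat.choose_symm (by omega)
    rw [show (j+1)+1 = j+2 from rfl, hsym]
    ring

lemma aa_cat (k : ℕ) : aaF 0 k = (catalan k : ℝ) := by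
  cases k with
  | zero => simp [aaF]
  | succ m =>
    have h1 : (m + 2) * catalan (m+1) = Nat.centralBinom (m+1) :=
      succ_mul_catalan_eq_centralBinom (m+1)
    have h2 : (2*m+2).choose (m+1) * (m+1) = (2*m+2).choose m * (m+2) := by
      have := Nat.choose_succ_right_eq (2*m+2) m
      rw [show 2*m+2-m = m+2 by omega] at this
      exact this
    have hcb : Nat.centralBinom (m+1) = (2*m+2).choose (m+1) := by
      rw [show 2*m+2 = 2*(m+1) by ring]; rfl
    have hne : ((m:ℝ) + 2) ≠ 0 := by positivity
    apply mul_left_cancel₀ hne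
    have h1' : ((m:ℝ) + 2) * (catalan (m+1) : ℝ) = ((2*m+2).choose (m+1) : ℝ) := by
      rw [← hcb]; exact_mod_cast h1
    have h2' : ((2*m+2).choose (m+1) : ℝ) * ((m:ℝ)+1) = ((2*m+2).choose m : ℝ) * ((m:ℝ)+2) := by
      exact_mod_cast h2
    simp only [aaF]
    rw [show 0+2*m+2 = 2*m+2 by ring, h1']
    nlinarith [h2']


noncomputable def HHF (b c : ℝ) (n r : ℕ) : ℝ :=
  b^n * c * ∑ k ∈ Finset.range (r+1),
    ((n + r + k).choose (n + 2*k) : ℝ) * aaF n k * b^k * c^(r-k)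

lemma HH_zero (b c : ℝ) (n : ℕ) : HHF b c n 0 = b^n * c := by
  simp [HHF, aa_zero]

lemma base1 (b c : ℝ) (s : ℕ) :
    HHF b c 1 s = HHF b c 0 (s+1) - c * HHF b c 0 s := by
  simp only [HHF, pow_one, pow_zero, one_mul]
  rw [Finset.sum_range_succ' (fun k => ((0 + (s+1) + k).choose (0 + 2*k) : ℝ) * aaF 0 k * b^k * c^(s+1-k)) (s+1),
      Finset.sum_range_succ' (fun k => ((0 + s + k).choose (0 + 2*k) : ℝ) * aaF 0 k * b^k * c^(s-k)) s]
  rw [Finset.sum_range_succ (fun k => ((0 + (s+1) + (k+1)).choose (0 + 2*(k+1)) : ℝ) * aaF 0 (k+1) * b^(k+1) * c^(s+1-(k+1))) s,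
      Finset.sum_range_succ (fun k => ((1 + s + k).choose (1 + 2*k) : ℝ) * aaF 1 k * b^k * c^(s-k)) s]
  have hsum : b * c * (∑ k ∈ Finset.range s, ((1 + s + k).choose (1 + 2*k) : ℝ) * aaF 1 k * b^k * c^(s-k))
      = c * (∑ k ∈ Finset.range s, ((0 + (s+1) + (k+1)).choose (0 + 2*(k+1)) : ℝ) * aaF 0 (k+1) * b^(k+1) * c^(s+1-(k+1)))
        - c * c * (∑ k ∈ Finset.range s, ((0 + s + (k+1)).choose (0 + 2*(k+1)) : ℝ) * aaF 0 (k+1) * b^(k+1) * c^(s-(k+1))) := by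
    rw [Finset.mul_sum, Finset.mul_sum, Finset.mul_sum, ← Finset.sum_sub_distrib]
    apply Finset.sum_congr rfl
    intro k hk
    have hks : k < s := Finset.mem_range.mp hk
    rw [show 0 + (s+1) + (k+1) = (s + k + 1) + 1 by ring,
        show 0 + 2*(k+1) = (2*k+1) + 1 by ring,
        pasc (s+k+1) (2*k+1),
        show 0 + s + (k+1) = s + k + 1 by ring,
        show 1 + s + k = s + k + 1 by ring,
        show 1 + 2*k = 2*k + 1 by ring,
        show s + 1 - (k+1) = s - k by omega,
        show s - k = (s - (k+1)) + 1 by omega,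
        pow_succ, aa_shift]
    ring
  -- extras
  have hF0 : ((0 + (s+1) + 0).choose (0 + 2*0) : ℝ) * aaF 0 0 * b^0 * c^(s+1-0) = c^(s+1) := by
    simp [aa_zero]
  have hG0 : ((0 + s + 0).choose (0 + 2*0) : ℝ) * aaF 0 0 * b^0 * c^(s-0) = c^s := by
    simp [aa_zero]
  have hFtop : ((0 + (s+1) + (s+1)).choose (0 + 2*(s+1)) : ℝ) * aaF 0 (s+1) * b^(s+1) * c^(s+1-(s+1)) = aaF 0 (s+1) * b^(s+1) := by
    rw [show 0 + (s+1) + (s+1) = 2*(s+1) by ring, show 0 + 2*(s+1) = 2*(s+1) by ring,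
        Nat.choose_self, show s+1-(s+1) = 0 by omega]
    simp
  have hLtop : ((1 + s + s).choose (1 + 2*s) : ℝ) * aaF 1 s * b^s * c^(s-s) = aaF 0 (s+1) * b^s := by
    rw [show 1 + s + s = 1 + 2*s by ring, Nat.choose_self, Nat.sub_self, aa_shift]
    simp
  rw [hF0, hG0, hFtop, hLtop]
  linear_combination hsum


lemma key (b c : ℝ) (n s : ℕ) :
    HHF b c (n+2) s = HHF b c (n+1) (s+1) - c * HHF b c (n+1) s - b * HHF b c n (s+1) := by
  simp only [HHF]
  rw [Finset.sum_range_succ' (fun k => (((n+1) + (s+1) + k).choose ((n+1) + 2*k) : ℝ) * aaF (n+1) k * b^k * c^(s+1-k)) (s+1),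
      Finset.sum_range_succ' (fun k => (((n+1) + s + k).choose ((n+1) + 2*k) : ℝ) * aaF (n+1) k * b^k * c^(s-k)) s,
      Finset.sum_range_succ' (fun k => ((n + (s+1) + k).choose (n + 2*k) : ℝ) * aaF n k * b^k * c^(s+1-k)) (s+1)]
  rw [Finset.sum_range_succ (fun k => (((n+1) + (s+1) + (k+1)).choose ((n+1) + 2*(k+1)) : ℝ) * aaF (n+1) (k+1) * b^(k+1) * c^(s+1-(k+1))) s,
      Finset.sum_range_succ (fun k => ((n + (s+1) + (k+1)).choose (n + 2*(k+1)) : ℝ) * aaF n (k+1) * b^(k+1) * c^(s+1-(k+1))) s,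
      Finset.sum_range_succ (fun k => (((n+2) + s + k).choose ((n+2) + 2*k) : ℝ) * aaF (n+2) k * b^k * c^(s-k)) s]
  have hsum : b^(n+2) * c * (∑ k ∈ Finset.range s, (((n+2) + s + k).choose ((n+2) + 2*k) : ℝ) * aaF (n+2) k * b^k * c^(s-k))
      = b^(n+1) * c * (∑ k ∈ Finset.range s, (((n+1) + (s+1) + (k+1)).choose ((n+1) + 2*(k+1)) : ℝ) * aaF (n+1) (k+1) * b^(k+1) * c^(s+1-(k+1)))
        - c * (b^(n+1) * c * (∑ k ∈ Finset.range s, (((n+1) + s + (k+1)).choose ((n+1) + 2*(k+1)) : ℝ) * aaF (n+1) (k+1) * b^(k+1) * c^(s-(k+1))))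
        - b * (b^n * c * (∑ k ∈ Finset.range s, ((n + (s+1) + (k+1)).choose (n + 2*(k+1)) : ℝ) * aaF n (k+1) * b^(k+1) * c^(s+1-(k+1)))) := by
    rw [Finset.mul_sum, Finset.mul_sum, Finset.mul_sum, Finset.mul_sum, Finset.mul_sum, Finset.mul_sum,
        ← Finset.sum_sub_distrib, ← Finset.sum_sub_distrib]
    apply Finset.sum_congr rfl
    intro k hk
    have hks : k < s := Finset.mem_range.mp hk
    rw [show (n+1) + (s+1) + (k+1) = (n+s+k+2) + 1 by ring,
        show (n+1) + 2*(k+1) = (n+2*k+2) + 1 by ring,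
        pasc (n+s+k+2) (n+2*k+2),
        show (n+1) + s + (k+1) = (n+s+k+2) by ring,
        show (n+2) + s + k = n+s+k+2 by ring,
        show (n+2) + 2*k = n+2*k+2 by ring,
        show n + (s+1) + (k+1) = n+s+k+2 by ring,
        show n + 2*(k+1) = n+2*k+2 by ring,
        show s+1-(k+1) = s - k by omega,
        show s - k = (s - (k+1)) + 1 by omega,
        pow_succ, aa_rec]
    ring
  -- extras at k = 0
  have hA0 : (((n+1) + (s+1) + 0).choose ((n+1) + 2*0) : ℝ) * aaF (n+1) 0 * b^0 * c^(s+1-0)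
      = (((n+s+1).choose n : ℝ) + ((n+s+1).choose (n+1) : ℝ)) * c^(s+1) := by
    rw [show (n+1) + (s+1) + 0 = (n+s+1)+1 by ring, show (n+1) + 2*0 = n+1 by ring,
        pasc (n+s+1) n, aa_zero]
    simp
  have hB0 : (((n+1) + s + 0).choose ((n+1) + 2*0) : ℝ) * aaF (n+1) 0 * b^0 * c^(s-0)
      = ((n+s+1).choose (n+1) : ℝ) * c^s := by
    rw [show (n+1) + s + 0 = n+s+1 by ring, show (n+1) + 2*0 = n+1 by ring, aa_zero]
    simp
  have hD0 : ((n + (s+1) + 0).choose (n + 2*0) : ℝ) * aaF n 0 * b^0 * c^(s+1-0)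
      = ((n+s+1).choose n : ℝ) * c^(s+1) := by
    rw [show n + (s+1) + 0 = n+s+1 by ring, show n + 2*0 = n by ring, aa_zero]
    simp
  -- extras at the top
  have hAtop : (((n+1) + (s+1) + (s+1)).choose ((n+1) + 2*(s+1)) : ℝ) * aaF (n+1) (s+1) * b^(s+1) * c^(s+1-(s+1))
      = aaF (n+1) (s+1) * b^(s+1) := by
    rw [show (n+1) + (s+1) + (s+1) = (n+1) + 2*(s+1) by ring, Nat.choose_self,
        show s+1-(s+1) = 0 by omega]
    simp
  have hDtop : ((n + (s+1) + (s+1)).choose (n + 2*(s+1)) : ℝ) * aaF n (s+1) * b^(s+1) * c^(s+1-(s+1))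
      = aaF n (s+1) * b^(s+1) := by
    rw [show n + (s+1) + (s+1) = n + 2*(s+1) by ring, Nat.choose_self,
        show s+1-(s+1) = 0 by omega]
    simp
  have hLtop : (((n+2) + s + s).choose ((n+2) + 2*s) : ℝ) * aaF (n+2) s * b^s * c^(s-s)
      = aaF (n+2) s * b^s := by
    rw [show (n+2) + s + s = (n+2) + 2*s by ring, Nat.choose_self, Nat.sub_self]
    simp
  rw [hA0, hB0, hD0, hAtop, hDtop, hLtop]
  linear_combination hsum + (b^(n+1) * b^s * b * c) * (aa_rec n s)




noncomputable def nuF (b c : ℝ) : ℕ → ℝ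
  | 0 => 1
  | (m+1) => HHF b c 0 m

noncomputable def GF (b c : ℝ) : ℕ → ℕ → ℝ
  | n, 0 => if n = 0 then 1 else 0
  | n, (m+1) => HHF b c n m

section Poly
variable (b c : ℝ) (P : ℕ → Polynomial ℝ)

lemma degP (hP0 : P 0 = 1) (hP1 : P 1 = X - C c)
    (hP : ∀ n, 2 ≤ n → P n = (X - C c) * P (n-1) - C b * X * P (n-2)) :
    ∀ n, (P n).natDegree ≤ n := by
  intro n
  induction n using Nat.strong_induction_on with
  | _ n IH =>
    rcases n with _ | n
    · simp [hP0]
    rcases n with _ | m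
    · rw [hP1]
      exact le_of_eq (natDegree_X_sub_C c)
    rw [hP (m+2) (by omega)]
    show ((X - C c) * P (m+1) - C b * X * P m).natDegree ≤ m + 2
    refine le_trans (natDegree_sub_le _ _) (max_le ?_ ?_)
    · refine le_trans (natDegree_mul_le) ?_
      have h1 : (X - C c : Polynomial ℝ).natDegree ≤ 1 := le_of_eq (natDegree_X_sub_C c)
      have h2 := IH (m+1) (by omega)
      omega
    · refine le_trans (natDegree_mul_le) ?_
      have h1 : (C b * X : Polynomial ℝ).natDegree ≤ 1 :=
        le_trans natDegree_mul_le (by simp)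
      have h2 := IH m (by omega)
      omega

lemma leadP (hP0 : P 0 = 1) (hP1 : P 1 = X - C c)
    (hP : ∀ n, 2 ≤ n → P n = (X - C c) * P (n-1) - C b * X * P (n-2)) :
    ∀ n, (P n).coeff n = 1 := by
  have hdeg := degP b c P hP0 hP1 hP
  intro n
  induction n using Nat.strong_induction_on with
  | _ n IH =>
    rcases n with _ | n
    · simp [hP0]
    rcases n with _ | m
    · rw [hP1]; simp
    rw [hP (m+2) (by omega), show m+2-1 = m+1 from rfl, show m+2-2 = m from rfl]
    have e1 : (P (m+1)).coeff (m+2) = 0 :=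
      coeff_eq_zero_of_natDegree_lt (lt_of_le_of_lt (hdeg (m+1)) (by omega))
    have e2 : (P m).coeff (m+1) = 0 :=
      coeff_eq_zero_of_natDegree_lt (lt_of_le_of_lt (hdeg m) (by omega))
    rw [sub_mul, coeff_sub, coeff_sub, mul_assoc, coeff_C_mul, coeff_C_mul]
    rw [show m + 2 = (m+1) + 1 from rfl, coeff_X_mul, coeff_X_mul]
    rw [IH (m+1) (by omega), e1, e2]
    ring

lemma claimC (hP0 : P 0 = 1) (hP1 : P 1 = X - C c)
    (hP : ∀ n, 2 ≤ n → P n = (X - C c) * P (n-1) - C b * X * P (n-2)) :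
    ∀ n r, (∑ k ∈ Finset.range (n+1), (P n).coeff k * nuF b c (k + r)) = GF b c n r := by
  have hdeg := degP b c P hP0 hP1 hP
  intro n
  induction n using Nat.strong_induction_on with
  | _ n IH =>
    rcases n with _ | n
    · intro r
      simp only [hP0, Finset.sum_range_one, Polynomial.coeff_one, if_pos rfl, Nat.zero_add]
      rcases r with _ | m
      · simp [nuF, GF]
      · simp [nuF, GF]
    rcases n with _ | m
    · intro r
      rw [hP1]
      rw [Finset.sum_range_succ, Finset.sum_range_one]
      simp only [coeff_sub, coeff_X_zero, coeff_X_one, coeff_C, if_pos rfl, Nat.zero_add]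
      norm_num
      rcases r with _ | s
      · show -(c * nuF b c 0) + nuF b c (1+0) = GF b c 1 0
        simp [nuF, GF, HH_zero]
      · show -(c * nuF b c (s+1)) + nuF b c (1 + (s+1)) = GF b c 1 (s+1)
        rw [show 1 + (s+1) = (s+1)+1 by omega]
        show -(c * HHF b c 0 s) + HHF b c 0 (s+1) = HHF b c 1 s
        rw [base1]
        ring
    · intro r
      have hco : ∀ k, (P (m+2)).coeff k
          = (X * P (m+1)).coeff k - c * (P (m+1)).coeff k - b * (X * P m).coeff k := by
        intro k
        rw [hP (m+2) (by omega)]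
        show ((X - C c) * P (m+1) - C b * X * P m).coeff k = _
        rw [sub_mul, coeff_sub, coeff_sub, mul_assoc, coeff_C_mul, coeff_C_mul]
      have step1 : (∑ k ∈ Finset.range (m+3), (P (m+2)).coeff k * nuF b c (k + r))
          = (∑ k ∈ Finset.range (m+3), (X * P (m+1)).coeff k * nuF b c (k + r))
            - c * (∑ k ∈ Finset.range (m+3), (P (m+1)).coeff k * nuF b c (k + r))
            - b * (∑ k ∈ Finset.range (m+3), (X * P m).coeff k * nuF b c (k + r)) := by
        rw [Finset.mul_sum, Finset.mul_sum, ← Finset.sum_sub_distrib, ← Finset.sum_sub_distrib]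
        apply Finset.sum_congr rfl
        intro k _
        rw [hco k]; ring
      have hS1 : (∑ k ∈ Finset.range (m+3), (X * P (m+1)).coeff k * nuF b c (k + r))
          = GF b c (m+1) (r+1) := by
        have e := Finset.sum_range_succ' (fun k => (X * P (m+1)).coeff k * nuF b c (k + r)) (m+2)
        rw [show m+2+1 = m+3 by omega] at e
        rw [e]
        have : ∀ k ∈ Finset.range (m+2),
            (X * P (m+1)).coeff (k+1) * nuF b c (k + 1 + r)
            = (P (m+1)).coeff k * nuF b c (k + (r+1)) := by
          intro k _
          rw [coeff_X_mul, show k + 1 + r = k + (r+1) by omega]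
        rw [Finset.sum_congr rfl this]
        simp only [mul_coeff_zero, coeff_X_zero, zero_mul, add_zero]
        exact IH (m+1) (by omega) (r+1)
      have hS2 : (∑ k ∈ Finset.range (m+3), (P (m+1)).coeff k * nuF b c (k + r))
          = GF b c (m+1) r := by
        have e := Finset.sum_range_succ (fun k => (P (m+1)).coeff k * nuF b c (k + r)) (m+2)
        rw [show m+2+1 = m+3 by omega] at e
        rw [e]
        have e1 : (P (m+1)).coeff (m+2) = 0 :=
          coeff_eq_zero_of_natDegree_lt (lt_of_le_of_lt (hdeg (m+1)) (by omega))
        rw [e1, zero_mul, add_zero]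
        exact IH (m+1) (by omega) r
      have hS3 : (∑ k ∈ Finset.range (m+3), (X * P m).coeff k * nuF b c (k + r))
          = GF b c m (r+1) := by
        have e := Finset.sum_range_succ' (fun k => (X * P m).coeff k * nuF b c (k + r)) (m+2)
        rw [show m+2+1 = m+3 by omega] at e
        rw [e]
        have h1 : ∀ k ∈ Finset.range (m+2),
            (X * P m).coeff (k+1) * nuF b c (k + 1 + r)
            = (P m).coeff k * nuF b c (k + (r+1)) := by
          intro k _
          rw [coeff_X_mul, show k + 1 + r = k + (r+1) by omega]
        rw [Finset.sum_congr rfl h1]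
        simp only [mul_coeff_zero, coeff_X_zero, zero_mul, add_zero]
        rw [Finset.sum_range_succ]
        have e2 : (P m).coeff (m+1) = 0 :=
          coeff_eq_zero_of_natDegree_lt (lt_of_le_of_lt (hdeg m) (by omega))
        rw [e2, zero_mul, add_zero]
        exact IH m (by omega) (r+1)
      rw [step1, hS1, hS2, hS3]
      rcases r with _ | s
      · show GF b c (m+1) 1 - c * GF b c (m+1) 0 - b * GF b c m 1 = GF b c (m+2) 0
        show HHF b c (m+1) 0 - c * (if m + 1 = 0 then (1:ℝ) else 0) - b * HHF b c m 0
          = if m + 2 = 0 then (1:ℝ) else 0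
        rw [if_neg (by omega), if_neg (by omega), HH_zero, HH_zero]
        ring
      · show GF b c (m+1) (s+2) - c * GF b c (m+1) (s+1) - b * GF b c m (s+2) = GF b c (m+2) (s+1)
        show HHF b c (m+1) (s+1) - c * HHF b c (m+1) s - b * HHF b c m (s+1) = HHF b c (m+2) s
        rw [key]

end Poly




/-- Closed form for the LBP moments: `μ_0 = 1` and, for `n ≥ 1`,
`μ_n = c ∑_{k=0}^{n-1} C(n+k-1, 2k) c^{n-1-k} b^k Catalan(k)`. -/
theorem lbp_moment_closed_form'
    (b c : ℝ) (hb : b ≠ 0) (hc : c ≠ 0)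
    (P : ℕ → Polynomial ℝ)
    (hP0 : P 0 = 1)
    (hP1 : P 1 = Polynomial.X - Polynomial.C c)
    (hP : ∀ n, 2 ≤ n →
      P n = (Polynomial.X - Polynomial.C c) * P (n - 1)
            - Polynomial.C b * Polynomial.X * P (n - 2))
    (μ : ℕ → ℝ)
    (hμ : ∀ n, (∑ k ∈ Finset.range (n + 1), (P n).coeff k * μ k) =
      if n = 0 then 1 else 0) :
    μ 0 = 1 ∧
    ∀ n, 1 ≤ n →
      μ n = c * ∑ k ∈ Finset.range n,
        ((n + k - 1).choose (2 * k) : ℝ) * c ^ (n - 1 - k) * b ^ k *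
          (catalan k : ℝ) := by
  have hlead := leadP b c P hP0 hP1 hP
  have hcl : ∀ n, (∑ k ∈ Finset.range (n+1), (P n).coeff k * nuF b c k)
      = if n = 0 then 1 else 0 := by
    intro n
    have h := claimC b c P hP0 hP1 hP n 0
    simp only [Nat.add_zero] at h
    rw [h]
    rcases n with _ | m <;> simp [GF]
  have hμν : ∀ n, μ n = nuF b c n := by
    intro n
    induction n using Nat.strong_induction_on with
    | _ n IH =>
      have h1 := hμ n
      have h2 := hcl n
      rw [Finset.sum_range_succ] at h1 h2
      have hsum : ∑ k ∈ Finset.range n, (P n).coeff k * μ k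
          = ∑ k ∈ Finset.range n, (P n).coeff k * nuF b c k :=
        Finset.sum_congr rfl fun k hk => by rw [IH k (Finset.mem_range.mp hk)]
      rw [hlead n, one_mul] at h1 h2
      rw [hsum] at h1
      linarith [h1, h2]
  constructor
  · rw [hμν 0]; rfl
  · intro n hn
    rcases n with _ | m
    · omega
    rw [hμν (m+1)]
    show HHF b c 0 m = _
    unfold HHF
    rw [pow_zero, one_mul]
    congr 1
    apply Finset.sum_congr rfl
    intro k hk
    rw [show 0 + m + k = m + k by ring, show 0 + 2*k = 2*k by ring,
        show m + 1 + k - 1 = m + k by omega, show m + 1 - 1 - k = m - k by omega,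
        aa_cat]
    ring
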